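/- Let S be a numerical semigroup with embedding dimension e, multiplicity m(S) (the smallest atom), Frobenius number f(S) and genus g(S). If m(S)/(f(S)+1) > δ for some δ > 0, then f(S)+1 ≤ (2/δ)^e. -/

import Mathlib

open scoped Classical

/-- A numerical semigroup: additively closed subset of ℕ containing 0 with finite complement. -/
def IsNumSgp (S : Set ℕ) : Prop :=
  0 ∈ S ∧ (∀ a ∈ S, ∀ b ∈ S, a + b ∈ S) ∧ Sᶜ.Finite

/-- The genus: number of gaps. -/
noncomputable def genus (S : Set ℕ) : ℕ := Sᶜ.ncard

/-- The Frobenius number: largest gap. -/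
noncomputable def frob (S : Set ℕ) : ℕ := sSup Sᶜ

/-- Atoms: minimal generators S* \ (S* + S*). -/
def atoms (S : Set ℕ) : Set ℕ :=
  (S \ {0}) \ {n | ∃ a ∈ S \ {0}, ∃ b ∈ S \ {0}, n = a + b}

/-- Embedding dimension: number of atoms. -/
noncomputable def edim (S : Set ℕ) : ℕ := (atoms S).ncard

/-- Multiplicity: smallest positive element. -/
noncomputable def mult (S : Set ℕ) : ℕ := sInf (S \ {0})

/-- Density of S in [0, f(S)]. -/
noncomputable def density (S : Set ℕ) : ℝ :=
  ((frob S : ℝ) + 1 - genus S) / ((frob S : ℝ) + 1)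


lemma zhai_rep_count (N : ℕ) : ∀ (B : Finset ℕ), (∀ b ∈ B, 0 < b) →
    ((Finset.range (N+1)).filter (fun n => ∃ v : ℕ → ℕ, n = ∑ b ∈ B, v b * b)).card
      ≤ ∏ b ∈ B, (N / b + 1) := by
  intro B
  induction B using Finset.induction_on with
  | empty =>
      intro _
      have hsub : ((Finset.range (N+1)).filter
          (fun n => ∃ v : ℕ → ℕ, n = ∑ b ∈ (∅:Finset ℕ), v b * b)) ⊆ {0} := by
        intro n hn
        simp only [Finset.mem_filter] at hn
        obtain ⟨-, v, hv⟩ := hn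
        simp only [Finset.sum_empty] at hv
        simp [hv]
      refine le_trans (Finset.card_le_card hsub) (by simp)
  | @insert a s ha ih =>
      intro hB
      have hapos : 0 < a := hB a (Finset.mem_insert_self a s)
      have ihs := ih (fun b hb => hB b (Finset.mem_insert_of_mem hb))
      have hch : ∀ n : ℕ, ∃ kr : ℕ × ℕ,
          (∃ v : ℕ → ℕ, n = ∑ b ∈ insert a s, v b * b) →
            (n = kr.1 * a + kr.2 ∧ ∃ v : ℕ → ℕ, kr.2 = ∑ b ∈ s, v b * b) := by
        intro n
        by_cases hn : ∃ v : ℕ → ℕ, n = ∑ b ∈ insert a s, v b * b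
        · obtain ⟨v, hv⟩ := hn
          rw [Finset.sum_insert ha] at hv
          exact ⟨(v a, ∑ b ∈ s, v b * b), fun _ => ⟨hv, v, rfl⟩⟩
        · exact ⟨(0,0), fun hc => absurd hc hn⟩
      choose f hfp using hch
      have hcard :
          ((Finset.range (N+1)).filter (fun n => ∃ v : ℕ → ℕ, n = ∑ b ∈ insert a s, v b * b)).card ≤
            ((Finset.range (N/a + 1)) ×ˢ ((Finset.range (N+1)).filter
              (fun n => ∃ v : ℕ → ℕ, n = ∑ b ∈ s, v b * b))).card := by
        apply Finset.card_le_card_of_injOn f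
        · intro n hn
          simp only [Finset.mem_coe, Finset.mem_filter, Finset.mem_range] at hn
          obtain ⟨hnN, hPn⟩ := hn
          obtain ⟨hdec, hrep⟩ := hfp n hPn
          have hnN' : n ≤ N := Nat.lt_succ_iff.mp hnN
          have hka : (f n).1 * a ≤ n := by
            have := Nat.le_add_right ((f n).1 * a) ((f n).2)
            rwa [← hdec] at this
          have hr : (f n).2 ≤ n := by
            have := Nat.le_add_left ((f n).2) ((f n).1 * a)
            rwa [← hdec] at this
          simp only [Finset.mem_coe, Finset.mem_product, Finset.mem_range, Finset.mem_filter]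
          exact ⟨Nat.lt_succ_of_le ((Nat.le_div_iff_mul_le hapos).mpr
            (le_trans hka hnN')), Nat.lt_succ_of_le (le_trans hr hnN'), hrep⟩
        · intro n₁ h₁ n₂ h₂ heq
          simp only [Finset.coe_filter, Set.mem_setOf_eq, Finset.mem_range] at h₁ h₂
          rw [(hfp n₁ h₁.2).1, (hfp n₂ h₂.2).1, heq]
      refine le_trans hcard ?_
      rw [Finset.card_product, Finset.card_range, Finset.prod_insert ha]
      exact Nat.mul_le_mul_left _ ihs

lemma zhai_two_pow_le (d m : ℕ) (hm : 0 < m) (hdm : d ≤ m) :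
    (2:ℝ)^d ≤ (1 + (d:ℝ)/m)^m := by
  have hm' : (0:ℝ) < m := by exact_mod_cast hm
  set u : ℝ := (d:ℝ)/m with hu
  have hu0 : 0 ≤ u := by positivity
  have hu1 : u ≤ 1 := by
    rw [hu, div_le_one hm']; exact_mod_cast hdm
  have hkey : (2:ℝ) ^ u ≤ 1 + u := by
    have h := Real.geom_mean_le_arith_mean2_weighted
      (by linarith : (0:ℝ) ≤ 1 - u) hu0 (zero_le_one) (by norm_num : (0:ℝ) ≤ 2)
      (by ring)
    rw [Real.one_rpow, one_mul] at h
    linarith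
  have h2 : ((2:ℝ) ^ u) ^ m = (2:ℝ)^d := by
    rw [← Real.rpow_natCast ((2:ℝ)^u) m, ← Real.rpow_mul (by norm_num : (0:ℝ) ≤ 2),
      hu, div_mul_cancel₀ _ (ne_of_gt hm'), Real.rpow_natCast]
  have h3 : ((2:ℝ)^u)^m ≤ (1+u)^m :=
    pow_le_pow_left₀ (Real.rpow_nonneg (by norm_num) u) hkey m
  rw [h2] at h3
  exact h3

set_option maxHeartbeats 1000000 in
theorem zhai_lemma4a (S : Set ℕ) (hS : IsNumSgp S) (hne : S ≠ Set.univ)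
    (δ : ℝ) (hδ : 0 < δ) (h : (mult S : ℝ) / ((frob S : ℝ) + 1) > δ) :
    (frob S : ℝ) + 1 ≤ (2 / δ)^(edim S) := by
  classical
  obtain ⟨h0, hadd, hfin⟩ := hS
  set F := frob S with hF
  set m := mult S with hmdef
  set e := edim S with hedef
  -- everything above F is in S
  have hFub : ∀ k, k ∉ S → k ≤ F := fun k hk => le_csSup hfin.bddAbove hk
  have hgtF : ∀ n, F < n → n ∈ S := by
    intro n hn
    by_contra hns
    have h2 := hFub n hns
    omega
  have hFS : F + 1 ∈ S := hgtF _ (lt_add_one F)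
  -- multiplicity facts
  have hSm : (S \ {0}).Nonempty := ⟨F + 1, hFS, by simp⟩
  have hmem1 : m ∈ S \ {0} := Nat.sInf_mem hSm
  have hmmem : m ∈ S ∧ m ≠ 0 := ⟨hmem1.1, hmem1.2⟩
  have hmle : ∀ s ∈ S, s ≠ 0 → m ≤ s := fun s hs hs0 => Nat.sInf_le ⟨hs, hs0⟩
  -- multiples
  have hmul : ∀ k s, s ∈ S → k * s ∈ S := by
    intro k
    induction k with
    | zero => intro s _; simpa using h0
    | succ k ihk =>
        intro s hs
        have := hadd _ (ihk s hs) _ hs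
        simpa [Nat.succ_mul] using this
  have hm2 : 2 ≤ m := by
    rcases Nat.lt_or_ge m 2 with hlt | hge
    · exfalso
      interval_cases m
      · exact hmmem.2 rfl
      · apply hne
        rw [Set.eq_univ_iff_forall]
        intro n
        have := hmul n 1 hmmem.1
        simpa using this
    · exact hge
  have hmF : m ≤ F + 1 := by
    have hns : m - 1 ∉ S := by
      intro hmem
      have := hmle _ hmem (by omega)
      omega
    have h2 := hFub _ hns
    omega
  -- atoms
  have hatom_iff : ∀ n : ℕ, n ∈ atoms S ↔ ((n ∈ S ∧ n ≠ 0) ∧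
      ¬ ∃ p, (p ∈ S ∧ p ≠ 0) ∧ ∃ q, (q ∈ S ∧ q ≠ 0) ∧ n = p + q) := by
    intro n
    simp [atoms, Set.mem_diff, Set.mem_setOf_eq]
  have hatom_m : m ∈ atoms S := by
    rw [hatom_iff]
    refine ⟨⟨hmmem.1, hmmem.2⟩, ?_⟩
    rintro ⟨p, ⟨hpS, hp0⟩, q, ⟨hqS, hq0⟩, hpq⟩
    have := hmle p hpS hp0
    have := hmle q hqS hq0
    omega
  have hatom_lb : ∀ a ∈ atoms S, m ≤ a ∧ a ∈ S ∧ a ≠ 0 := by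
    intro a haa
    rw [hatom_iff] at haa
    exact ⟨hmle a haa.1.1 haa.1.2, haa.1.1, haa.1.2⟩
  have hatom_ub : ∀ a ∈ atoms S, a ≤ F + m := by
    intro a haa
    by_contra hc
    push_neg at hc
    rw [hatom_iff] at haa
    apply haa.2
    refine ⟨m, ⟨hmmem.1, hmmem.2⟩, a - m, ⟨hgtF _ (by omega), by omega⟩, by omega⟩
  have hfinA : (atoms S).Finite := by
    apply Set.Finite.subset (Set.finite_Icc m (F + m))
    intro a haa
    rw [Set.mem_Icc]
    exact ⟨(hatom_lb a haa).1, hatom_ub a haa⟩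
  set At := hfinA.toFinset with hAtdef
  have hAt : ∀ a, a ∈ At ↔ a ∈ atoms S := fun a => hfinA.mem_toFinset
  have heAt : e = At.card := Set.ncard_eq_toFinset_card _ hfinA
  have hmAt : m ∈ At := (hAt m).mpr hatom_m
  have hepos : 1 ≤ e := by
    rw [heAt]
    exact Finset.card_pos.mpr ⟨m, hmAt⟩
  set B := At.erase m with hBdef
  have hBcard : B.card = e - 1 := by
    rw [hBdef, Finset.card_erase_of_mem hmAt, heAt]
  have hBlb : ∀ b ∈ B, m + 1 ≤ b := by
    intro b hb
    have h1 : b ≠ m := Finset.ne_of_mem_erase hb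
    have h2 := (hatom_lb b ((hAt b).mp (Finset.mem_of_mem_erase hb))).1
    omega
  -- generation by atoms
  have hgen : ∀ n, n ∈ S → ∃ v : ℕ → ℕ, n = ∑ b ∈ At, v b * b := by
    intro n
    induction n using Nat.strong_induction_on with
    | _ n ih =>
      intro hn
      rcases Nat.eq_zero_or_pos n with h0n | h0n
      · exact ⟨fun _ => 0, by simp [h0n]⟩
      by_cases hat : n ∈ atoms S
      · refine ⟨fun x => if x = n then 1 else 0, ?_⟩
        have hnAt : n ∈ At := (hAt n).mpr hat
        rw [Finset.sum_eq_single n]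
        · simp
        · intro b _ hbn; simp [hbn]
        · intro hnot; exact absurd hnAt hnot
      · have hn' : n ∈ S ∧ n ≠ 0 := ⟨hn, by omega⟩
        have hat' : ∃ p, (p ∈ S ∧ p ≠ 0) ∧ ∃ q, (q ∈ S ∧ q ≠ 0) ∧ n = p + q := by
          by_contra hc
          exact hat ((hatom_iff n).mpr ⟨hn', hc⟩)
        obtain ⟨p, ⟨hpS, hp0⟩, q, ⟨hqS, hq0⟩, hpq⟩ := hat'
        obtain ⟨vp, hvp⟩ := ih p (by omega) hpS
        obtain ⟨vq, hvq⟩ := ih q (by omega) hqS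
        refine ⟨fun x => vp x + vq x, ?_⟩
        rw [hpq, hvp, hvq, ← Finset.sum_add_distrib]
        exact Finset.sum_congr rfl (fun b _ => by ring)
  -- sums of atom-multiples are in S
  have hsum_mem : ∀ (T : Finset ℕ), (∀ b ∈ T, b ∈ S) → ∀ v : ℕ → ℕ,
      (∑ b ∈ T, v b * b) ∈ S := by
    intro T
    induction T using Finset.induction_on with
    | empty => intro _ v; simpa using h0
    | @insert a s ha ih =>
        intro hT v
        rw [Finset.sum_insert ha]
        exact hadd _ (hmul (v a) a (hT a (Finset.mem_insert_self a s))) _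
          (ih (fun b hb => hT b (Finset.mem_insert_of_mem hb)) v)
  have hAtS : ∀ b ∈ At, b ∈ S := fun b hb => (hatom_lb b ((hAt b).mp hb)).2.1
  set N := F + m with hNdef
  -- Apéry elements
  have hwex : ∀ j : ℕ, j < m → ∃ wj : ℕ, wj % m = j ∧ wj ≤ N ∧
      ∃ v : ℕ → ℕ, wj = ∑ b ∈ B, v b * b := by
    intro j hj
    set T : Set ℕ := {s | s ∈ S ∧ s % m = j} with hTdef
    have hTne : T.Nonempty := by
      refine ⟨j + (F+1) * m, ?_, ?_⟩
      · apply hgtF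
        have : F + 1 ≤ (F+1) * m := Nat.le_mul_of_pos_right _ (by omega)
        omega
      · rw [Nat.add_mul_mod_self_right]
        exact Nat.mod_eq_of_lt hj
    obtain ⟨hwS, hwmod⟩ : sInf T ∈ S ∧ sInf T % m = j := Nat.sInf_mem hTne
    have hwN : sInf T ≤ N := by
      by_contra hc
      push_neg at hc
      have h2 : sInf T - m ∈ S := hgtF _ (by omega)
      have h3 : (sInf T - m) % m = j := by
        have heq : sInf T - m + m = sInf T := by omega
        calc (sInf T - m) % m = (sInf T - m + m) % m := (Nat.add_mod_right _ m).symm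
          _ = sInf T % m := by rw [heq]
          _ = j := hwmod
      have := Nat.sInf_le (show sInf T - m ∈ T from ⟨h2, h3⟩)
      omega
    obtain ⟨v, hv⟩ := hgen (sInf T) hwS
    rcases Nat.eq_zero_or_pos (v m) with hvm | hvm
    · refine ⟨sInf T, hwmod, hwN, v, ?_⟩
      rw [hv, ← Finset.add_sum_erase At (fun b => v b * b) hmAt, hvm, zero_mul,
        zero_add, hBdef]
    · exfalso
      set v' := Function.update v m (v m - 1) with hv'
      have hsame : ∑ b ∈ At.erase m, v' b * b = ∑ b ∈ At.erase m, v b * b :=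
        Finset.sum_congr rfl (fun b hb => by
          rw [hv', Function.update_of_ne (Finset.ne_of_mem_erase hb)])
      have hrsum : ∑ b ∈ At, v' b * b + m = sInf T := by
        rw [hv, ← Finset.add_sum_erase At (fun b => v b * b) hmAt,
          ← Finset.add_sum_erase At (fun b => v' b * b) hmAt, hsame]
        have hvm' : v' m = v m - 1 := by rw [hv']; exact Function.update_self _ _ _
        rw [hvm']
        obtain ⟨k, hk⟩ : ∃ k, v m = k + 1 := ⟨v m - 1, by omega⟩
        rw [hk]
        simp only [Nat.add_sub_cancel]
        ring
      have hrS : ∑ b ∈ At, v' b * b ∈ S := hsum_mem At hAtS v'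
      have hrmod : (∑ b ∈ At, v' b * b) % m = j := by
        have h5 := hwmod
        rw [← hrsum, Nat.add_mod_right] at h5
        exact h5
      have := Nat.sInf_le (show (∑ b ∈ At, v' b * b) ∈ T from ⟨hrS, hrmod⟩)
      omega
  have hwex' : ∀ j : ℕ, ∃ wj, j < m → (wj % m = j ∧ wj ≤ N ∧
      ∃ v : ℕ → ℕ, wj = ∑ b ∈ B, v b * b) := by
    intro j
    by_cases hj : j < m
    · obtain ⟨wj, hp⟩ := hwex j hj
      exact ⟨wj, fun _ => hp⟩
    · exact ⟨0, fun hh => absurd hh hj⟩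
  choose w hwp using hwex'
  -- the counting bound
  have hcount : m ≤ ∏ b ∈ B, (N / b + 1) := by
    have hinj : m ≤ ((Finset.range (N+1)).filter
        (fun n => ∃ v : ℕ → ℕ, n = ∑ b ∈ B, v b * b)).card := by
      conv_lhs => rw [← Finset.card_range m]
      apply Finset.card_le_card_of_injOn w
      · intro j hj
        rw [Finset.mem_coe, Finset.mem_range] at hj
        obtain ⟨h1, h2, h3⟩ := hwp j hj
        simp only [Finset.mem_coe, Finset.mem_filter, Finset.mem_range]
        exact ⟨by omega, h3⟩
      · intro j₁ h₁ j₂ h₂ heq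
        rw [Finset.mem_coe, Finset.mem_range] at h₁ h₂
        have e₁ := (hwp j₁ h₁).1
        have e₂ := (hwp j₂ h₂).1
        rw [← e₁, ← e₂, heq]
    exact le_trans hinj (zhai_rep_count N B
      (fun b hb => Nat.lt_of_lt_of_le (Nat.succ_pos m) (hBlb b hb)))
  -- real arithmetic
  set c := F + 1 with hcdef
  have hcm : m ≤ c := hmF
  have hmR : (2:ℝ) ≤ (m:ℝ) := by exact_mod_cast hm2
  have hmpos : (0:ℝ) < m := by linarith
  have hcR : (m:ℝ) ≤ (c:ℝ) := by exact_mod_cast hcm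
  have hcpos : (0:ℝ) < c := by linarith
  set x : ℝ := 2 * c / m with hx
  have hxpos : 0 < x := by positivity
  have hNc : N + 1 = c + m := by omega
  have hNR : (N:ℝ) + 1 = (c:ℝ) + m := by exact_mod_cast hNc
  have hprod_cast : (m:ℝ) ≤ ∏ b ∈ B, (((N/b : ℕ):ℝ) + 1) := by
    have h' : ((m:ℕ):ℝ) ≤ ((∏ b ∈ B, (N/b + 1) : ℕ) : ℝ) := Nat.cast_le.mpr hcount
    rw [Nat.cast_prod] at h'
    push_cast at h'
    exact h'
  have hwrap : (∀ b ∈ B, (((N/b : ℕ):ℝ) + 1) ≤ x) → (m:ℝ) ≤ 2 * x^(e-1) := by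
    intro hfac
    have h1 : ∏ b ∈ B, (((N/b:ℕ):ℝ)+1) ≤ ∏ _b ∈ B, x :=
      Finset.prod_le_prod (fun b _ => by positivity) hfac
    rw [Finset.prod_const, hBcard] at h1
    linarith [le_trans hprod_cast h1, pow_nonneg (le_of_lt hxpos) (e-1)]
  have key : (m:ℝ) ≤ 2 * x ^ (e-1) := by
    rcases le_or_gt (2*m) c with hbig | hsmall
    · -- c ≥ 2m : each factor ≤ x
      apply hwrap
      intro b hb
      have hbm : m + 1 ≤ b := hBlb b hb
      have hbR : (m:ℝ) + 1 ≤ (b:ℝ) := by exact_mod_cast hbm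
      have hbpos : (0:ℝ) < b := by linarith
      have hdiv : ((N/b : ℕ):ℝ) ≤ (N:ℝ)/b := Nat.cast_div_le
      have hbigR : 2*(m:ℝ) ≤ c := by exact_mod_cast hbig
      have hgoal : (N:ℝ)/b + 1 ≤ 2*c/m := by
        rw [div_add' _ _ _ (ne_of_gt hbpos), div_le_div_iff₀ hbpos hmpos]
        have h1 : (2*(c:ℝ) - m) * ((m:ℝ)+1) ≤ (2*(c:ℝ) - m) * b :=
          mul_le_mul_of_nonneg_left hbR (by linarith)
        nlinarith [h1, hNR, mul_nonneg (by linarith : (0:ℝ) ≤ (c:ℝ) - 2*m)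
          (by linarith : (0:ℝ) ≤ (m:ℝ))]
      calc ((N/b : ℕ):ℝ) + 1 ≤ (N:ℝ)/b + 1 := by linarith
        _ ≤ x := by rw [hx]; exact hgoal
    · -- c < 2m
      set d := c - m with hddef
      have hcd : c = m + d := by omega
      have hfac3 : ∀ b ∈ B, ((N/b : ℕ):ℝ) + 1 ≤ 3 := by
        intro b hb
        have hbm := hBlb b hb
        have h2 : N / b < 3 := (Nat.div_lt_iff_lt_mul (by omega)).mpr (by omega)
        have h3 : ((N/b : ℕ):ℝ) ≤ 2 := by exact_mod_cast (by omega : N/b ≤ 2)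
        linarith
      rcases le_or_gt m (2*d) with h2a | h2b
      · -- 2d ≥ m : 3 ≤ x, each factor ≤ x
        apply hwrap
        intro b hb
        have h3x : (3:ℝ) ≤ x := by
          rw [hx, le_div_iff₀ hmpos]
          exact_mod_cast (by omega : 3*m ≤ 2*c)
        exact le_trans (hfac3 b hb) h3x
      · -- 2d < m
        set B3 := B.filter (fun b => 2*b ≤ N) with hB3
        set t := B3.card with htdef
        have hteq : t = (Finset.filter (fun b => 2*b ≤ N) B).card := by
          rw [htdef, hB3]
        have htle : t ≤ e - 1 := by
          rw [hteq, ← hBcard]; exact Finset.card_filter_le _ _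
        have h2t : 2 * t ≤ d := by
          have hsub : B3 ⊆ Finset.Icc (m+1) (N/2) := by
            intro b hb
            rw [hB3, Finset.mem_filter] at hb
            rw [Finset.mem_Icc]
            exact ⟨hBlb b hb.1, (Nat.le_div_iff_mul_le (by omega)).mpr (by omega)⟩
          have hcard3 := Finset.card_le_card hsub
          rw [Nat.card_Icc, ← htdef] at hcard3
          omega
        have htm : t * m ≤ d * (e-1) := by
          rcases Nat.eq_zero_or_pos t with h | h
          · simp [h]
          · have hd1 : 1 ≤ d := by omega
            have hesub : insert m (Finset.Ico c (2*m)) ⊆ At := by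
              intro n hn
              rcases Finset.mem_insert.mp hn with rfl | hn
              · exact hmAt
              · rw [Finset.mem_Ico] at hn
                rw [hAt, hatom_iff]
                refine ⟨⟨hgtF n (by omega), by omega⟩, ?_⟩
                rintro ⟨p, ⟨hpS, hp0⟩, q, ⟨hqS, hq0⟩, hpq⟩
                have := hmle p hpS hp0
                have := hmle q hqS hq0
                omega
            have hcard2 : m - d ≤ e - 1 := by
              have h1 := Finset.card_le_card hesub
              rw [Finset.card_insert_of_notMem (by rw [Finset.mem_Ico]; omega),
                Nat.card_Ico, ← heAt] at h1
              omega
            have hm2d : m ≤ 2 * (e - 1) := by omega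
            calc t * m ≤ t * (2*(e-1)) := Nat.mul_le_mul_left t hm2d
              _ = 2*t*(e-1) := by ring
              _ ≤ d * (e-1) := Nat.mul_le_mul_right _ h2t
        set u : ℝ := (d:ℝ)/m with hu
        have hu0 : 0 ≤ u := by positivity
        have hRL : (2:ℝ)^d ≤ (1+u)^m := zhai_two_pow_le d m (by omega) (by omega)
        have h2tA : (2:ℝ)^t ≤ (1+u)^(e-1) := by
          have h1u0 : (0:ℝ) ≤ 1 + u := by linarith
          refine le_of_pow_le_pow_left₀ (by omega : m ≠ 0) (pow_nonneg h1u0 _) ?_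
          calc ((2:ℝ)^t)^m = 2^(t*m) := by rw [← pow_mul]
            _ ≤ 2^(d*(e-1)) := pow_le_pow_right₀ one_le_two htm
            _ = ((2:ℝ)^d)^(e-1) := by rw [pow_mul]
            _ ≤ ((1+u)^m)^(e-1) := pow_le_pow_left₀ (by positivity) hRL _
            _ = ((1+u)^(e-1))^m := by rw [← pow_mul, ← pow_mul, Nat.mul_comm]
        have hsplit : ∏ b ∈ B, (((N/b:ℕ):ℝ)+1) ≤ 3^t * 2^(e-1-t) := by
          rw [← Finset.prod_filter_mul_prod_filter_not B (fun b => 2*b ≤ N)]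
          have hP1 : ∏ b ∈ B3, (((N/b:ℕ):ℝ)+1) ≤ 3^t := by
            calc ∏ b ∈ B3, (((N/b:ℕ):ℝ)+1) ≤ ∏ _b ∈ B3, (3:ℝ) :=
                Finset.prod_le_prod (fun b _ => by positivity)
                  (fun b hb => hfac3 b (Finset.mem_of_mem_filter b hb))
              _ = 3^t := by rw [Finset.prod_const, htdef]
          have hcard' : (B.filter (fun b => ¬ 2*b ≤ N)).card = e-1-t := by
            have hh := Finset.card_filter_add_card_filter_not
              (s := B) (p := fun b => 2*b ≤ N)
            rw [hBcard, ← hteq] at hh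
            omega
          have hP2 : ∏ b ∈ B.filter (fun b => ¬ 2*b ≤ N), (((N/b:ℕ):ℝ)+1)
              ≤ 2^(e-1-t) := by
            calc ∏ b ∈ B.filter (fun b => ¬ 2*b ≤ N), (((N/b:ℕ):ℝ)+1)
                ≤ ∏ _b ∈ B.filter (fun b => ¬ 2*b ≤ N), (2:ℝ) := by
                  apply Finset.prod_le_prod (fun b _ => by positivity)
                  intro b hb
                  rw [Finset.mem_filter] at hb
                  have hbm := hBlb b hb.1
                  have h1 : N / b < 2 := (Nat.div_lt_iff_lt_mul (by omega)).mpr (by omega)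
                  have h2 : ((N/b:ℕ):ℝ) ≤ 1 := by exact_mod_cast (by omega : N/b ≤ 1)
                  linarith
              _ = 2^(e-1-t) := by rw [Finset.prod_const, hcard']
          exact mul_le_mul hP1 hP2
            (Finset.prod_nonneg (fun b _ => by positivity)) (by positivity)
        have hcdR : (c:ℝ) = (m:ℝ) + d := by exact_mod_cast hcd
        have hxu : x = 2*(1+u) := by
          rw [hx, hu, hcdR]
          field_simp
        have hx1 : x^(e-1) = 2^(e-1) * (1+u)^(e-1) := by
          rw [hxu, mul_pow]
        have hfin2 : (3:ℝ)^t * 2^(e-1-t) ≤ 2 * x^(e-1) := by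
          have e1 : (3:ℝ)^t = (3/2)^t * 2^t := by rw [← mul_pow]; norm_num
          have e2 : (2:ℝ)^t * 2^(e-1-t) = 2^(e-1) := by rw [← pow_add]; congr 1; omega
          have h32 : ((3:ℝ)/2)^t ≤ 2^t := pow_le_pow_left₀ (by norm_num) (by norm_num) t
          have hle1 : ((3:ℝ)/2)^t ≤ (1+u)^(e-1) := le_trans h32 h2tA
          have step : (3:ℝ)^t * 2^(e-1-t) = (3/2)^t * 2^(e-1) := by
            rw [e1, mul_assoc, e2]
          rw [step]
          calc ((3:ℝ)/2)^t * 2^(e-1) ≤ (1+u)^(e-1) * 2^(e-1) :=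
              mul_le_mul_of_nonneg_right hle1 (by positivity)
            _ = x^(e-1) := by rw [hx1]; ring
            _ ≤ 2 * x^(e-1) := by nlinarith [pow_pos hxpos (e-1)]
        calc (m:ℝ) ≤ ∏ b ∈ B, (((N/b:ℕ):ℝ)+1) := hprod_cast
          _ ≤ 3^t * 2^(e-1-t) := hsplit
          _ ≤ 2 * x^(e-1) := hfin2
  -- conclude
  have hckey : (c:ℝ) ≤ x ^ e := by
    have he1 : e - 1 + 1 = e := by omega
    rw [← he1, pow_succ]
    have h1 : (m:ℝ)/2 ≤ x^(e-1) := by linarith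
    have h2 : (c:ℝ) = ((m:ℝ)/2) * x := by
      rw [hx]
      field_simp
      try ring
    rw [h2]
    exact mul_le_mul_of_nonneg_right h1 (le_of_lt hxpos)
  have hgoalcast : ((F:ℝ)+1) = (c:ℝ) := by
    rw [hcdef]
    exact (Nat.cast_add_one F).symm
  rw [hgoalcast] at h ⊢
  have hδc : δ * c < m := by
    rw [gt_iff_lt, lt_div_iff₀ hcpos] at h
    linarith
  have hxle : x ≤ 2/δ := by
    rw [hx, div_le_div_iff₀ hmpos hδ]
    nlinarith
  calc (c:ℝ) ≤ x^e := hckey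
    _ ≤ (2/δ)^e := pow_le_pow_left₀ (le_of_lt hxpos) hxle e

-- #print axioms zhai_lemma4a
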